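/- Let m ≥ 2 and R₂ₘ = (1/2)·circulant(J, O, …, O, Y) with 2×2 blocks as usual. Let B be a 2m×2m adjacency matrix (symmetric 0/1, zero diagonal), partitioned into 2×2 blocks B_{ij}, such that B' = R₂ₘᵀBR₂ₘ is also an adjacency matrix. Then every 2×2 block B_{ij} contains an even number of ones. -/

import Mathlib

open Matrix

/-- The block-circulant regular orthogonal matrix `(1/2)·circulant(J,O,…,O,Y)`. -/
noncomputable def Rcirc (m : ℕ) : Matrix (Fin (2*m)) (Fin (2*m)) ℝ :=
  Matrix.of fun i j =>
    if ((j : ℕ)/2 + m - (i : ℕ)/2) % m = 0 then 1/2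
    else if ((j : ℕ)/2 + m - (i : ℕ)/2) % m = m - 1 then
      (if (i : ℕ) % 2 = (j : ℕ) % 2 then 1/2 else -(1/2))
    else 0

/-- The index `2p + r` of the `r`-th member of the `p`-th pair. -/
noncomputable def pidx {m : ℕ} (p : Fin m) (r : Fin 2) : Fin (2*m) :=
  ⟨2 * (p : ℕ) + (r : ℕ), by have := p.isLt; have := r.isLt; omega⟩

lemma modcase {t m : ℕ} (h : t < 2*m) : (t < m ∧ t % m = t) ∨ (m ≤ t ∧ t % m = t - m) := by
  rcases lt_or_ge t m with h1 | h1
  · exact Or.inl ⟨h1, Nat.mod_eq_of_lt h1⟩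
  · right
    refine ⟨h1, ?_⟩
    rw [Nat.mod_eq_sub_mod h1, Nat.mod_eq_of_lt (by omega)]

lemma Rval {m : ℕ} [NeZero m] (hm : 2 ≤ m) (P q : Fin m) (ρ σ : Fin 2) :
    Rcirc m (pidx P ρ) (pidx q σ)
      = if P = q then 1/2
        else if P = q + 1 then (if ρ = σ then 1/2 else -(1/2)) else 0 := by
  have hP := P.isLt; have hq := q.isLt
  have hρ := ρ.isLt; have hσ := σ.isLt
  have hone : ((1 : Fin m) : ℕ) = 1 := by
    rw [Fin.val_one', Nat.mod_eq_of_lt (by omega)]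
  have hpq1 : ((q + 1 : Fin m) : ℕ) = ((q : ℕ) + 1) % m := by
    rw [Fin.add_def, hone]
  have h1 : ((pidx P ρ : Fin (2*m)) : ℕ) = 2 * P + ρ := rfl
  have h2 : ((pidx q σ : Fin (2*m)) : ℕ) = 2 * q + σ := rfl
  have e1 : (2*(q:ℕ)+σ)/2 = q := by omega
  have e2 : (2*(P:ℕ)+ρ)/2 = P := by omega
  have e3 : (2*(P:ℕ)+ρ) % 2 = ρ := by omega
  have e4 : (2*(q:ℕ)+σ) % 2 = σ := by omega
  have hmc := modcase (t := (q:ℕ) + m - P) (m := m) (by omega)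
  have hmc2 := modcase (t := (q:ℕ) + 1) (m := m) (by omega)
  show (if ((2*(q:ℕ)+σ)/2 + m - (2*(P:ℕ)+ρ)/2) % m = 0 then (1/2:ℝ)
    else if ((2*(q:ℕ)+σ)/2 + m - (2*(P:ℕ)+ρ)/2) % m = m - 1 then
      (if (2*(P:ℕ)+ρ) % 2 = (2*(q:ℕ)+σ) % 2 then 1/2 else -(1/2))
    else 0)
    = (if P = q then 1/2
        else if P = q + 1 then (if (ρ:Fin 2) = σ then 1/2 else -(1/2)) else 0)
  rw [e1, e2, e3, e4]
  have key1 : (((q:ℕ) + m - (P:ℕ)) % m = 0) ↔ ((P:ℕ) = (q:ℕ)) := by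
    rcases hmc with ⟨hlt, h⟩ | ⟨hle, h⟩ <;> rw [h] <;> omega
  have key2 : (((q:ℕ) + m - (P:ℕ)) % m = m - 1) ↔ ((P:ℕ) = ((q:ℕ)+1) % m) := by
    rcases hmc with ⟨hlt, h⟩ | ⟨hle, h⟩ <;> rcases hmc2 with ⟨glt, g⟩ | ⟨gle, g⟩ <;> rw [h, g] <;> omega
  have key3 : ((ρ:ℕ) = (σ:ℕ)) ↔ (ρ = σ) := (Fin.ext_iff).symm
  have key1' : (((q:ℕ) + m - (P:ℕ)) % m = 0) ↔ (P = q) :=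
    key1.trans Fin.ext_iff.symm
  have key2' : (((q:ℕ) + m - (P:ℕ)) % m = m - 1) ↔ (P = q + 1) := by
    rw [key2, ← hpq1, ← Fin.ext_iff]
  simp only [key1', key2', key3]

noncomputable def pairEquiv (m : ℕ) : Fin m × Fin 2 ≃ Fin (2*m) where
  toFun x := pidx x.1 x.2
  invFun i := (⟨(i : ℕ)/2, by have := i.isLt; omega⟩, ⟨(i : ℕ) % 2, by omega⟩)
  left_inv := by
    rintro ⟨p, r⟩
    have hp := p.isLt; have hr := r.isLt
    ext <;> simp [pidx] <;> omega
  right_inv := by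
    intro i
    have hi := i.isLt
    ext
    simp [pidx]
    omega

lemma sum_pair {m : ℕ} (f : Fin (2*m) → ℝ) :
    ∑ i, f i = ∑ p : Fin m, (f (pidx p 0) + f (pidx p 1)) := by
  rw [← Equiv.sum_comp (pairEquiv m) f, Fintype.sum_prod_type]
  refine Finset.sum_congr rfl fun p _ => ?_
  rw [Fin.sum_univ_two]
  rfl

lemma fin_ne_succ {m : ℕ} [NeZero m] (hm : 2 ≤ m) (p : Fin m) : p ≠ p + 1 := by
  have hone : ((1 : Fin m) : ℕ) = 1 := by rw [Fin.val_one', Nat.mod_eq_of_lt (by omega)]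
  have hp := p.isLt
  intro h
  rw [Fin.ext_iff, Fin.add_def] at h
  simp only [hone] at h
  rcases modcase (t := (p : ℕ) + 1) (m := m) (by omega) with ⟨h1, h2⟩ | ⟨h1, h2⟩ <;>
    rw [h2] at h <;> omega

lemma Rcolsum {m : ℕ} [NeZero m] (hm : 2 ≤ m) (P p : Fin m) (ρ : Fin 2) :
    Rcirc m (pidx P ρ) (pidx p 0) + Rcirc m (pidx P ρ) (pidx p 1)
      = if P = p then 1 else 0 := by
  rw [Rval hm, Rval hm]
  by_cases h1 : P = p
  · have h2 : ¬ P = p + 1 := by rw [h1]; exact fin_ne_succ hm p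
    simp [h1]
    norm_num
  · by_cases h2 : P = p + 1
    · have hm1 : m ≠ 1 := by omega
      fin_cases ρ <;> simp [h1, h2, hm1] <;> norm_num
    · simp [h1, h2]

lemma key {m : ℕ} [NeZero m] (hm : 2 ≤ m) (B : Matrix (Fin (2*m)) (Fin (2*m)) ℝ)
    (p q : Fin m) :
    ((Rcirc m)ᵀ * B * Rcirc m) (pidx p 0) (pidx q 0)
      + ((Rcirc m)ᵀ * B * Rcirc m) (pidx p 1) (pidx q 0)
    = 1/2 * ((B (pidx p 0) (pidx q 0) + B (pidx p 0) (pidx q 1)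
        + B (pidx p 1) (pidx q 0) + B (pidx p 1) (pidx q 1))
      + (B (pidx p 0) (pidx (q+1) 0) + B (pidx p 1) (pidx (q+1) 0)
        - B (pidx p 0) (pidx (q+1) 1) - B (pidx p 1) (pidx (q+1) 1))) := by
  have expand : ∀ (i j : Fin (2*m)), ((Rcirc m)ᵀ * B * Rcirc m) i j
      = ∑ l, (∑ k, Rcirc m k i * B k l) * Rcirc m l j := by
    intro i j
    simp [Matrix.mul_apply, Matrix.transpose_apply]
  rw [expand, expand, ← Finset.sum_add_distrib]
  have step1 : ∀ l : Fin (2*m),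
      (∑ k, Rcirc m k (pidx p 0) * B k l) * Rcirc m l (pidx q 0)
        + (∑ k, Rcirc m k (pidx p 1) * B k l) * Rcirc m l (pidx q 0)
      = (B (pidx p 0) l + B (pidx p 1) l) * Rcirc m l (pidx q 0) := by
    intro l
    rw [← add_mul]
    congr 1
    rw [← Finset.sum_add_distrib]
    have : ∀ k, Rcirc m k (pidx p 0) * B k l + Rcirc m k (pidx p 1) * B k l
        = (Rcirc m k (pidx p 0) + Rcirc m k (pidx p 1)) * B k l := by
      intro k; ring
    rw [Finset.sum_congr rfl fun k _ => this k]
    rw [sum_pair (fun k => (Rcirc m k (pidx p 0) + Rcirc m k (pidx p 1)) * B k l)]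
    simp only [Rcolsum hm, ite_mul, one_mul, zero_mul]
    simp [Finset.sum_add_distrib, Finset.sum_ite_eq']
  rw [Finset.sum_congr rfl fun l _ => step1 l]
  rw [sum_pair (fun l => (B (pidx p 0) l + B (pidx p 1) l) * Rcirc m l (pidx q 0))]
  have hqq1 : ¬ (q = q + 1) := fin_ne_succ hm q
  have split_ite : ∀ (c : ℝ) (Q : Fin m),
      (if Q = q then (1/2:ℝ) else if Q = q+1 then c else 0)
        = (if Q = q then (1/2:ℝ) else 0) + (if Q = q+1 then c else 0) := by
    intro c Q
    by_cases h1 : Q = q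
    · subst h1; simp [hqq1]
    · simp [h1]
  simp only [Rval hm, split_ite]
  simp only [mul_add, mul_ite, mul_zero, Finset.sum_add_distrib, Finset.sum_ite_eq',
    Finset.mem_univ, if_true]
  norm_num
  ring


/-- If `B` is an adjacency matrix such that `B' = RᵀBR` is again an adjacency matrix
(`R = Rcirc m`), then every `2×2` block of `B` contains an even number of ones. -/
theorem stmt_9 (m : ℕ) (hm : 2 ≤ m) (B : Matrix (Fin (2*m)) (Fin (2*m)) ℝ)
    (hBsym : Bᵀ = B) (hB01 : ∀ i j, B i j = 0 ∨ B i j = 1) (hBdiag : ∀ i, B i i = 0)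
    (hB'sym : ((Rcirc m)ᵀ * B * Rcirc m)ᵀ = (Rcirc m)ᵀ * B * Rcirc m)
    (hB'01 : ∀ i j, ((Rcirc m)ᵀ * B * Rcirc m) i j = 0 ∨ ((Rcirc m)ᵀ * B * Rcirc m) i j = 1)
    (hB'diag : ∀ i, ((Rcirc m)ᵀ * B * Rcirc m) i i = 0) :
    ∀ p q : Fin m, ∃ k : ℤ,
      B (pidx p 0) (pidx q 0) + B (pidx p 0) (pidx q 1) +
      B (pidx p 1) (pidx q 0) + B (pidx p 1) (pidx q 1) = 2 * (k : ℝ) := by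
  haveI : NeZero m := ⟨by omega⟩
  have hBint : ∀ i j, ∃ n : ℤ, (n = 0 ∨ n = 1) ∧ B i j = (n : ℝ) := by
    intro i j
    rcases hB01 i j with h | h
    · exact ⟨0, Or.inl rfl, by simp [h]⟩
    · exact ⟨1, Or.inr rfl, by simp [h]⟩
  choose nB hnB01 hnB using hBint
  obtain ⟨N, hN⟩ : ∃ N : Fin m → Fin m → ℤ, ∀ p q : Fin m,
      N p q = nB (pidx p 0) (pidx q 0) + nB (pidx p 0) (pidx q 1)
        + nB (pidx p 1) (pidx q 0) + nB (pidx p 1) (pidx q 1) :=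
    ⟨_, fun _ _ => rfl⟩
  have hstep : ∀ p q : Fin m, N p q % 2 = N p (q+1) % 2 := by
    intro p q
    have hk := key hm B p q
    obtain ⟨M, hMdef⟩ : ∃ M : ℤ, M = nB (pidx p 0) (pidx (q+1) 0)
        + nB (pidx p 1) (pidx (q+1) 0)
        - nB (pidx p 0) (pidx (q+1) 1) - nB (pidx p 1) (pidx (q+1) 1) := ⟨_, rfl⟩
    have hrhs : (B (pidx p 0) (pidx q 0) + B (pidx p 0) (pidx q 1)
        + B (pidx p 1) (pidx q 0) + B (pidx p 1) (pidx q 1))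
      + (B (pidx p 0) (pidx (q+1) 0) + B (pidx p 1) (pidx (q+1) 0)
        - B (pidx p 0) (pidx (q+1) 1) - B (pidx p 1) (pidx (q+1) 1))
        = ((N p q : ℤ) : ℝ) + ((M : ℤ) : ℝ) := by
      rw [hN, hMdef]
      simp only [hnB]
      push_cast
      ring
    rw [hrhs] at hk
    have hZ : ∃ z : ℤ, N p q + M = 2 * z := by
      rcases hB'01 (pidx p 0) (pidx q 0) with c1 | c1 <;>
        rcases hB'01 (pidx p 1) (pidx q 0) with c2 | c2 <;>
        rw [c1, c2] at hk
      · exact ⟨0, by exact_mod_cast (by push_cast; linarith :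
          ((N p q + M : ℤ) : ℝ) = ((2 * 0 : ℤ) : ℝ))⟩
      · exact ⟨1, by exact_mod_cast (by push_cast; linarith :
          ((N p q + M : ℤ) : ℝ) = ((2 * 1 : ℤ) : ℝ))⟩
      · exact ⟨1, by exact_mod_cast (by push_cast; linarith :
          ((N p q + M : ℤ) : ℝ) = ((2 * 1 : ℤ) : ℝ))⟩
      · exact ⟨2, by exact_mod_cast (by push_cast; linarith :
          ((N p q + M : ℤ) : ℝ) = ((2 * 2 : ℤ) : ℝ))⟩
    obtain ⟨z, hz⟩ := hZ
    have hM2 : M = N p (q+1) - 2 * nB (pidx p 0) (pidx (q+1) 1)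
        - 2 * nB (pidx p 1) (pidx (q+1) 1) := by
      rw [hMdef, hN]; ring
    omega
  open Fin.NatCast in
  have hiter : ∀ (k : ℕ) (p q : Fin m), N p q % 2 = N p (q + (k : Fin m)) % 2 := by
    intro k
    induction k with
    | zero => intro p q; simp
    | succ n ih =>
      intro p q
      have hc : ((n+1 : ℕ) : Fin m) = ((n : ℕ) : Fin m) + 1 := by push_cast; ring
      rw [hc, ← add_assoc, ← hstep p (q + (n : Fin m))]
      exact ih p q
  have hall : ∀ p q q' : Fin m, N p q % 2 = N p q' % 2 := by
    intro p q q'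
    have h := hiter ((q' - q : Fin m) : ℕ) p q
    rwa [Fin.cast_val_eq_self, add_comm, sub_add_cancel] at h
  have hdiag : ∀ p : Fin m, N p p = 2 * nB (pidx p 0) (pidx p 1) := by
    intro p
    have h00 : nB (pidx p 0) (pidx p 0) = 0 := by
      have h := hBdiag (pidx p 0); rw [hnB] at h; exact_mod_cast h
    have h11 : nB (pidx p 1) (pidx p 1) = 0 := by
      have h := hBdiag (pidx p 1); rw [hnB] at h; exact_mod_cast h
    have h10 : nB (pidx p 1) (pidx p 0) = nB (pidx p 0) (pidx p 1) := by
      have h := congrFun (congrFun hBsym (pidx p 0)) (pidx p 1)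
      rw [Matrix.transpose_apply, hnB, hnB] at h
      exact_mod_cast h
    rw [hN]
    omega
  intro p q
  have h1 := hall p q p
  have h2 := hdiag p
  obtain ⟨k, hk2⟩ : ∃ k : ℤ, N p q = 2 * k := ⟨N p q / 2, by omega⟩
  refine ⟨k, ?_⟩
  have hNval : B (pidx p 0) (pidx q 0) + B (pidx p 0) (pidx q 1)
      + B (pidx p 1) (pidx q 0) + B (pidx p 1) (pidx q 1) = ((N p q : ℤ) : ℝ) := by
    rw [hN]; simp only [hnB]; push_cast; ring
  rw [hNval, hk2]
  push_cast
  ring
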